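/- Let F = ⟨a,b⟩ be the free group of rank 2. There exists a subset S of F that is closed in the profinite topology of F such that the product S⟨b⟩ of S with the cyclic subgroup generated by b is not closed in the profinite topology of F. -/

import Mathlib

open scoped Pointwise

/-- A subset `C` of a group is closed in the profinite topology iff every point
outside `C` is separated from `C` by a coset of a finite-index normal subgroup. -/
def IsPTClosed {G : Type*} [Group G] (C : Set G) : Prop :=
  ∀ x : G, x ∉ C → ∃ N : Subgroup G, N.Normal ∧ N.FiniteIndex ∧
    (x • (N : Set G)) ∩ C = ∅

namespace PTWork

abbrev F := FreeGroup (Fin 2)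
abbrev SL := Matrix.SpecialLinearGroup (Fin 2) ℤ

/-- nonzero integer vectors -/
abbrev V := {v : Fin 2 → ℤ // v ≠ 0}

instance : SMul SL V :=
  ⟨fun M v => ⟨(↑M : Matrix (Fin 2) (Fin 2) ℤ).mulVec v.1, by
    intro h
    apply v.2
    have h2 : (↑(M⁻¹) : Matrix (Fin 2) (Fin 2) ℤ).mulVec
        ((↑M : Matrix (Fin 2) (Fin 2) ℤ).mulVec v.1) = 0 := by rw [h, Matrix.mulVec_zero]
    rwa [Matrix.mulVec_mulVec, ← Matrix.SpecialLinearGroup.coe_mul, inv_mul_cancel,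
      Matrix.SpecialLinearGroup.coe_one, Matrix.one_mulVec] at h2⟩⟩

theorem smul_coe (M : SL) (v : V) :
    (M • v).1 = (↑M : Matrix (Fin 2) (Fin 2) ℤ).mulVec v.1 := rfl

instance : MulAction SL V where
  one_smul v := Subtype.ext <| by
    rw [smul_coe, Matrix.SpecialLinearGroup.coe_one, Matrix.one_mulVec]
  mul_smul M N v := Subtype.ext <| by
    rw [smul_coe, smul_coe, smul_coe, Matrix.mulVec_mulVec,
      Matrix.SpecialLinearGroup.coe_mul]

def A : SL := ⟨!![1, 2; 0, 1], by simp [Matrix.det_fin_two_of]⟩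
def B : SL := ⟨!![1, 0; 2, 1], by simp [Matrix.det_fin_two_of]⟩

theorem A_inv : A⁻¹ = (⟨!![1, -2; 0, 1], by simp [Matrix.det_fin_two_of]⟩ : SL) := by
  apply inv_eq_of_mul_eq_one_right
  ext i j
  change (!![1, 2; 0, 1] * !![1, -2; 0, 1] : Matrix (Fin 2) (Fin 2) ℤ) i j = _
  fin_cases i <;> fin_cases j <;>
    simp [A, Matrix.SpecialLinearGroup.coe_mul, Matrix.mul_apply, Fin.sum_univ_two]

theorem B_inv : B⁻¹ = (⟨!![1, 0; -2, 1], by simp [Matrix.det_fin_two_of]⟩ : SL) := by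
  apply inv_eq_of_mul_eq_one_right
  ext i j
  change (!![1, 0; 2, 1] * !![1, 0; -2, 1] : Matrix (Fin 2) (Fin 2) ℤ) i j = _
  fin_cases i <;> fin_cases j <;>
    simp [B, Matrix.SpecialLinearGroup.coe_mul, Matrix.mul_apply, Fin.sum_univ_two]

theorem mulVec_comp (a b c d : ℤ) (v : Fin 2 → ℤ) :
    (!![a, b; c, d]).mulVec v = ![a * v 0 + b * v 1, c * v 0 + d * v 1] := by
  funext i
  fin_cases i <;> simp [Matrix.mulVec, dotProduct, Fin.sum_univ_two, Matrix.vecHead, Matrix.vecTail]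


def gens : Fin 2 → SL := ![A, B]

def X : Fin 2 → Set V :=
  ![{v | v.1 1 = 0 ∨ (v.1 0 - v.1 1) * v.1 1 > 0},
    {v | (v.1 1 - v.1 0) * v.1 0 ≥ 0}]

def Y : Fin 2 → Set V :=
  ![{v | v.1 1 ≠ 0 ∧ (v.1 0 + v.1 1) * v.1 1 ≤ 0},
    {v | v.1 0 ≠ 0 ∧ (v.1 1 + v.1 0) * v.1 0 < 0}]

theorem memX0 (v : V) : v ∈ X 0 ↔ (v.1 1 = 0 ∨ (v.1 0 - v.1 1) * v.1 1 > 0) := Iff.rfl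
theorem memX1 (v : V) : v ∈ X 1 ↔ (v.1 1 - v.1 0) * v.1 0 ≥ 0 := Iff.rfl
theorem memY0 (v : V) : v ∈ Y 0 ↔ (v.1 1 ≠ 0 ∧ (v.1 0 + v.1 1) * v.1 1 ≤ 0) := Iff.rfl
theorem memY1 (v : V) : v ∈ Y 1 ↔ (v.1 0 ≠ 0 ∧ (v.1 1 + v.1 0) * v.1 0 < 0) := Iff.rfl

theorem nz (v : V) : ¬(v.1 0 = 0 ∧ v.1 1 = 0) := by
  rintro ⟨h0, h1⟩
  apply v.2
  funext k
  fin_cases k <;> assumption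

theorem XY00 : Disjoint (X 0) (Y 0) := by
  rw [Set.disjoint_left]; intro v h1 h2
  rw [memX0] at h1; rw [memY0] at h2
  rcases h1 with h1 | h1
  · exact h2.1 h1
  · nlinarith [h2.2, sq_nonneg (v.1 1)]

theorem XY01 : Disjoint (X 0) (Y 1) := by
  rw [Set.disjoint_left]; intro v h1 h2
  rw [memX0] at h1; rw [memY1] at h2
  rcases h1 with h1 | h1
  · rw [h1] at h2; nlinarith [h2.2, sq_nonneg (v.1 0)]
  · nlinarith [h2.2, sq_nonneg (v.1 0), sq_nonneg (v.1 1)]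

theorem XY10 : Disjoint (X 1) (Y 0) := by
  rw [Set.disjoint_left]; intro v h1 h2
  rw [memX1] at h1; rw [memY0] at h2
  nlinarith [h2.2, mul_self_pos.mpr h2.1, sq_nonneg (v.1 0)]

theorem XY11 : Disjoint (X 1) (Y 1) := by
  rw [Set.disjoint_left]; intro v h1 h2
  rw [memX1] at h1; rw [memY1] at h2
  nlinarith [h2.2, sq_nonneg (v.1 0)]

theorem XX01 : Disjoint (X 0) (X 1) := by
  rw [Set.disjoint_left]
  intro v h1 h2
  rw [memX0] at h1; rw [memX1] at h2
  rcases h1 with h1 | h1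
  · have hv0 : v.1 0 ≠ 0 := fun h => (nz v) ⟨h, h1⟩
    rw [h1] at h2
    have h3 : v.1 0 * v.1 0 ≤ 0 := by nlinarith
    have h4 : v.1 0 * v.1 0 = 0 := le_antisymm h3 (mul_self_nonneg _)
    exact hv0 (mul_self_eq_zero.mp h4)
  · nlinarith [sq_nonneg (v.1 0 - v.1 1)]

theorem YY01 : Disjoint (Y 0) (Y 1) := by
  rw [Set.disjoint_left]
  intro v h1 h2
  rw [memY0] at h1; rw [memY1] at h2
  nlinarith [h1.2, h2.2, sq_nonneg (v.1 0 + v.1 1)]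

theorem hXpp : ∀ i, gens i • (Y i)ᶜ ⊆ X i := by
  have h0 : gens 0 • (Y 0)ᶜ ⊆ X 0 := by
    rintro w ⟨v, hv, rfl⟩
    rw [Set.mem_compl_iff, memY0] at hv
    push_neg at hv
    show gens 0 • v ∈ X 0
    have : gens 0 • v = A • v := rfl
    rw [this, memX0, smul_coe,
      show (A : Matrix (Fin 2) (Fin 2) ℤ) = !![1,2;0,1] from rfl, mulVec_comp]
    simp only [Matrix.cons_val_zero, Matrix.cons_val_one, Matrix.head_cons]
    rcases eq_or_ne (v.1 1) 0 with h | h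
    · left; omega
    · right; have := hv h; nlinarith
  have h1 : gens 1 • (Y 1)ᶜ ⊆ X 1 := by
    rintro w ⟨v, hv, rfl⟩
    rw [Set.mem_compl_iff, memY1] at hv
    push_neg at hv
    show gens 1 • v ∈ X 1
    have : gens 1 • v = B • v := rfl
    rw [this, memX1, smul_coe,
      show (B : Matrix (Fin 2) (Fin 2) ℤ) = !![1,0;2,1] from rfl, mulVec_comp]
    simp only [Matrix.cons_val_zero, Matrix.cons_val_one, Matrix.head_cons]
    rcases eq_or_ne (v.1 0) 0 with h | h
    · rw [h]; ring_nf; try exact le_refl 0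
    · have := hv h; nlinarith
  intro i
  fin_cases i
  · exact h0
  · exact h1

theorem hYpp : ∀ i, gens⁻¹ i • (X i)ᶜ ⊆ Y i := by
  have h0 : gens⁻¹ 0 • (X 0)ᶜ ⊆ Y 0 := by
    rintro w ⟨v, hv, rfl⟩
    rw [Set.mem_compl_iff, memX0] at hv
    push_neg at hv
    show gens⁻¹ 0 • v ∈ Y 0
    have he : gens⁻¹ 0 • v = A⁻¹ • v := rfl
    rw [he, memY0, smul_coe]
    rw [show ((A⁻¹ : SL) :
        Matrix (Fin 2) (Fin 2) ℤ) = !![1,-2;0,1] from congrArg Subtype.val A_inv, mulVec_comp]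
    simp only [Matrix.cons_val_zero, Matrix.cons_val_one, Matrix.head_cons]
    exact ⟨by simpa using hv.1, by nlinarith [hv.2]⟩
  have h1 : gens⁻¹ 1 • (X 1)ᶜ ⊆ Y 1 := by
    rintro w ⟨v, hv, rfl⟩
    rw [Set.mem_compl_iff, memX1] at hv
    push_neg at hv
    show gens⁻¹ 1 • v ∈ Y 1
    have he : gens⁻¹ 1 • v = B⁻¹ • v := rfl
    rw [he, memY1, smul_coe]
    rw [show ((B⁻¹ : SL) :
        Matrix (Fin 2) (Fin 2) ℤ) = !![1,0;-2,1] from congrArg Subtype.val B_inv, mulVec_comp]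
    simp only [Matrix.cons_val_zero, Matrix.cons_val_one, Matrix.head_cons]
    constructor
    · intro h
      have h0' : v.1 0 = 0 := by linarith
      rw [h0'] at hv; simp at hv
    · nlinarith [hv]
  intro i
  fin_cases i
  · exact h0
  · exact h1

theorem rho_injective : Function.Injective (FreeGroup.lift gens) := by
  apply FreeGroup.injective_lift_of_ping_pong gens X Y
  · intro i
    fin_cases i
    · exact ⟨⟨![2, 1], fun h => by simpa using congrFun h 0⟩, Or.inr (by norm_num)⟩
    · exact ⟨⟨![1, 2], fun h => by simpa using congrFun h 0⟩, by norm_num [memX1]⟩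
  · intro i j hij
    fin_cases i <;> fin_cases j <;>
      first
        | exact absurd rfl hij
        | exact XX01
        | exact XX01.symm
  · intro i j hij
    fin_cases i <;> fin_cases j <;>
      first
        | exact absurd rfl hij
        | exact YY01
        | exact YY01.symm
  · intro i j
    fin_cases i <;> fin_cases j <;>
      first
        | exact XY00
        | exact XY01
        | exact XY10
        | exact XY11
  · intro i
    fin_cases i
    · exact hXpp 0
    · exact hXpp 1
  · intro i
    fin_cases i
    · exact hYpp 0
    · exact hYpp 1


/-- Residual finiteness separation for the free group on two generators. -/
theorem sep (x y : F) (hxy : x ≠ y) :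
    ∃ (H : Type) (_ : Group H) (_ : Finite H) (ψ : F →* H), ψ x ≠ ψ y := by
  have hρ : FreeGroup.lift gens x ≠ FreeGroup.lift gens y := fun h => hxy (rho_injective h)
  -- find an entry where the integer matrices differ
  have hmat : (↑(FreeGroup.lift gens x) : Matrix (Fin 2) (Fin 2) ℤ) ≠
      ↑(FreeGroup.lift gens y) := fun h => hρ (Subtype.ext h)
  have hentry : ∃ i j, (↑(FreeGroup.lift gens x) : Matrix (Fin 2) (Fin 2) ℤ) i j ≠
      (↑(FreeGroup.lift gens y) : Matrix (Fin 2) (Fin 2) ℤ) i j := by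
    by_contra h
    push_neg at h
    exact hmat (by ext i j; exact h i j)
  obtain ⟨i, j, hij⟩ := hentry
  set Mx := (↑(FreeGroup.lift gens x) : Matrix (Fin 2) (Fin 2) ℤ) with hMx
  set My := (↑(FreeGroup.lift gens y) : Matrix (Fin 2) (Fin 2) ℤ) with hMy
  set d : ℤ := Mx i j - My i j with hd
  have hdne : d ≠ 0 := sub_ne_zero_of_ne hij
  set m : ℕ := d.natAbs + 1 with hm
  refine ⟨Matrix.SpecialLinearGroup (Fin 2) (ZMod m), inferInstance, inferInstance,
    (Matrix.SpecialLinearGroup.map (Int.castRingHom (ZMod m))).comp (FreeGroup.lift gens), ?_⟩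
  intro h
  simp only [MonoidHom.comp_apply] at h
  have h2 : ((Mx i j : ℤ) : ZMod m) = ((My i j : ℤ) : ZMod m) := by
    have := congrArg (fun M : Matrix.SpecialLinearGroup (Fin 2) (ZMod m) =>
      (↑M : Matrix (Fin 2) (Fin 2) (ZMod m)) i j) h
    simpa [Matrix.SpecialLinearGroup.map_apply_coe, RingHom.mapMatrix_apply, Matrix.map_apply,
      ← hMx, ← hMy] using this
  have h3 : (m : ℤ) ∣ (Mx i j - My i j) := by
    have := (ZMod.intCast_eq_intCast_iff' _ _ _).mp h2
    exact Int.ModEq.dvd (Int.ModEq.symm this)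
  have h4 : m ∣ d.natAbs := by
    have := Int.natAbs_dvd_natAbs.mpr (hd ▸ h3)
    simpa using this
  have h5 : m ≤ d.natAbs := Nat.le_of_dvd (Int.natAbs_pos.mpr hdne) h4
  omega


def ag : F := FreeGroup.of 0
def bg : F := FreeGroup.of 1

def T (i : ℕ) : ℕ := ∑ k ∈ Finset.range i, 4 ^ k

theorem T_succ (i : ℕ) : T (i + 1) = T i + 4 ^ i := Finset.sum_range_succ _ _

theorem T_strictMono : StrictMono T := by
  apply strictMono_nat_of_lt_succ
  intro n
  rw [T_succ]
  have : 0 < 4 ^ n := Nat.pow_pos (by norm_num)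
  omega

theorem three_T (L : ℕ) : 3 * T L + 1 = 4 ^ L := by
  induction L with
  | zero => simp [T]
  | succ n ih => rw [T_succ, pow_succ]; omega

theorem T_split (L d : ℕ) : T (L + d) = T L + 4 ^ L * T d := by
  induction d with
  | zero => simp [T]
  | succ n ih => rw [← Nat.add_assoc, T_succ, ih, T_succ, pow_add]; ring

def s (i : ℕ) : F := ag ^ (Nat.factorial i) * bg ^ (T i)

def S : Set F := Set.range s

def ab : F →* Multiplicative (ℤ × ℤ) :=
  FreeGroup.lift (fun i => Multiplicative.ofAdd (if i = 0 then ((1 : ℤ), (0 : ℤ)) else (0, 1)))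

theorem ab_a : ab ag = Multiplicative.ofAdd ((1 : ℤ), (0 : ℤ)) := by
  simp [ab, ag]

theorem ab_b : ab bg = Multiplicative.ofAdd ((0 : ℤ), (1 : ℤ)) := by
  simp [ab, bg]

theorem ab_s (i : ℕ) : ab (s i) = Multiplicative.ofAdd (((Nat.factorial i : ℤ), (T i : ℤ))) := by
  rw [s, map_mul, map_pow, map_pow, ab_a, ab_b, ← ofAdd_nsmul, ← ofAdd_nsmul, ← ofAdd_add]
  congr 1
  ext <;> simp [nsmul_eq_mul]

theorem ab_bz (j : ℤ) : ab (bg ^ j) = Multiplicative.ofAdd (((0 : ℤ), (j : ℤ))) := by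
  rw [map_zpow, ab_b, ← ofAdd_zsmul]
  congr 1
  ext <;> simp

/-- the mod-M abelianization -/
def abM (M : ℕ) : F →* Multiplicative (ZMod M × ZMod M) :=
  (AddMonoidHom.toMultiplicative
    ((Int.castAddHom (ZMod M)).prodMap (Int.castAddHom (ZMod M)))).comp ab

theorem abM_apply (M : ℕ) (x : F) :
    abM M x = Multiplicative.ofAdd ((((ab x).toAdd.1 : ℤ) : ZMod M),
      (((ab x).toAdd.2 : ℤ) : ZMod M)) := rfl

theorem abM_sep {M : ℕ} {x y : F} (h : abM M x = abM M y) :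
    (M : ℤ) ∣ ((ab x).toAdd.1 - (ab y).toAdd.1) ∧
      (M : ℤ) ∣ ((ab x).toAdd.2 - (ab y).toAdd.2) := by
  rw [abM_apply, abM_apply] at h
  have h' := congrArg Multiplicative.toAdd h
  simp only [toAdd_ofAdd, Prod.mk.injEq] at h'
  constructor
  · have := (ZMod.intCast_eq_intCast_iff' _ _ _).mp h'.1
    exact (Int.ModEq.dvd this.symm)
  · have := (ZMod.intCast_eq_intCast_iff' _ _ _).mp h'.2
    exact (Int.ModEq.dvd this.symm)

theorem large_i {β : ℤ} {L i : ℕ} (hL : (3 * β + 1).natAbs < 4 ^ L) (hLi : L ≤ i)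
    (hdvd : ((4 ^ L : ℕ) : ℤ) ∣ β - T i) : False := by
  have hsplit : (T i : ℤ) = T L + 4 ^ L * T (i - L) := by
    have h := T_split L (i - L)
    rw [Nat.add_sub_cancel' hLi] at h
    exact_mod_cast congrArg (fun n : ℕ => (n : ℤ)) h
  have h1 : ((4 ^ L : ℕ) : ℤ) ∣ β - T L := by
    have he : β - (T L : ℤ) = (β - T i) + (4 ^ L : ℕ) * T (i - L) := by
      rw [hsplit]; push_cast; ring
    rw [he]
    exact dvd_add hdvd ⟨T (i - L), rfl⟩
  have h2 : ((4 ^ L : ℕ) : ℤ) ∣ 3 * β + 1 := by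
    have h3 : (3 : ℤ) * β + 1 = 3 * (β - T L) + (4 ^ L : ℕ) := by
      have h4 := three_T L
      have h5 : ((4 : ℤ) ^ L) = 3 * (T L : ℤ) + 1 := by exact_mod_cast h4.symm
      push_cast
      push_cast at h5
      linarith
    rw [h3]
    exact dvd_add (Dvd.dvd.mul_left h1 3) dvd_rfl
  have hne : 3 * β + 1 ≠ 0 := by omega
  have h6 : 4 ^ L ∣ (3 * β + 1).natAbs := by
    have h7 := Int.natAbs_dvd_natAbs.mpr h2
    rwa [Int.natAbs_natCast] at h7
  have := Nat.le_of_dvd (Int.natAbs_pos.mpr hne) h6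
  omega


theorem finish {G : Type} [Group G] [Finite G] (φ : F →* G) (x : F)
    (hsep : ∀ i : ℕ, φ x ≠ φ (s i)) :
    ∃ N : Subgroup F, N.Normal ∧ N.FiniteIndex ∧ (x • (N : Set F)) ∩ S = ∅ := by
  refine ⟨φ.ker, inferInstance, inferInstance, ?_⟩
  apply Set.eq_empty_iff_forall_notMem.mpr
  rintro y ⟨hy1, hy2⟩
  obtain ⟨i, rfl⟩ := hy2
  obtain ⟨n, hn, he⟩ := hy1
  have hn' : n ∈ φ.ker := hn
  have : φ (s i) = φ x := by
    rw [← he]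
    show φ (x * n) = φ x
    rw [map_mul, MonoidHom.mem_ker.mp hn', mul_one]
  exact hsep i this.symm

theorem S_closed : IsPTClosed S := by
  intro x hx
  set α : ℤ := (Multiplicative.toAdd (ab x)).1 with hα
  set β : ℤ := (Multiplicative.toAdd (ab x)).2 with hβ
  set L : ℕ := (3 * β + 1).natAbs + 1 with hL
  have hLbound : (3 * β + 1).natAbs < 4 ^ L := by
    have h1 := Nat.lt_pow_self (n := (3 * β + 1).natAbs) (by norm_num : 1 < 4)
    have h2 : (4:ℕ) ^ ((3 * β + 1).natAbs) ≤ 4 ^ L := by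
      apply Nat.pow_le_pow_right (by norm_num)
      omega
    omega
  set c : ℕ → ℕ := fun i => (α - Nat.factorial i).natAbs + (β - T i).natAbs + 1 with hc
  set M : ℕ := 4 ^ L * ∏ i ∈ Finset.range L, c i with hM
  have hMpos : 0 < M := by
    apply Nat.mul_pos (Nat.pow_pos (by norm_num))
    apply Finset.prod_pos
    intro i _
    simp [hc]
  haveI : NeZero M := ⟨hMpos.ne'⟩
  have hM4 : ((4 ^ L : ℕ) : ℤ) ∣ (M : ℤ) := by
    exact_mod_cast Int.natCast_dvd_natCast.mpr ⟨∏ i ∈ Finset.range L, c i, rfl⟩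
  have hMc : ∀ i, i < L → ((c i : ℕ) : ℤ) ∣ (M : ℤ) := by
    intro i hi
    apply Int.natCast_dvd_natCast.mpr
    exact Dvd.dvd.mul_left (Finset.dvd_prod_of_mem c (Finset.mem_range.mpr hi)) _
  have key : ∀ i : ℕ, (α = Nat.factorial i ∧ β = T i) ∨
      ¬ ((M : ℤ) ∣ α - Nat.factorial i ∧ (M : ℤ) ∣ β - T i) := by
    intro i
    rcases lt_or_ge i L with hiL | hiL
    · by_cases hpair : α = Nat.factorial i ∧ β = T i
      · exact Or.inl hpair
      · right
        rintro ⟨h1, h2⟩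
        have hc1 : ((c i : ℕ) : ℤ) ∣ α - Nat.factorial i := dvd_trans (hMc i hiL) h1
        have hc2 : ((c i : ℕ) : ℤ) ∣ β - T i := dvd_trans (hMc i hiL) h2
        have e1 : c i ∣ (α - Nat.factorial i).natAbs := by
          have := Int.natAbs_dvd_natAbs.mpr hc1
          rwa [Int.natAbs_natCast] at this
        have e2 : c i ∣ (β - T i).natAbs := by
          have := Int.natAbs_dvd_natAbs.mpr hc2
          rwa [Int.natAbs_natCast] at this
        have hlt1 : (α - Nat.factorial i).natAbs < c i := by simp [hc]
        have hlt2 : (β - T i).natAbs < c i := by simp [hc]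
        have z1 : (α - Nat.factorial i).natAbs = 0 := by
          rcases Nat.eq_zero_or_pos ((α - Nat.factorial i).natAbs) with h | h
          · exact h
          · exact absurd (Nat.le_of_dvd h e1) (by omega)
        have z2 : (β - T i).natAbs = 0 := by
          rcases Nat.eq_zero_or_pos ((β - T i).natAbs) with h | h
          · exact h
          · exact absurd (Nat.le_of_dvd h e2) (by omega)
        have w1 : α = Nat.factorial i := by
          have := Int.natAbs_eq_zero.mp z1; omega
        have w2 : β = T i := by
          have := Int.natAbs_eq_zero.mp z2; omega
        exact hpair ⟨w1, w2⟩
    · right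
      rintro ⟨h1, h2⟩
      exact large_i hLbound hiL (dvd_trans hM4 h2)
  have habs : ∀ i : ℕ, abM M x = abM M (s i) →
      (M : ℤ) ∣ α - Nat.factorial i ∧ (M : ℤ) ∣ β - T i := by
    intro i h
    have := abM_sep h
    rwa [ab_s, toAdd_ofAdd] at this
  by_cases hex : ∃ i : ℕ, α = Nat.factorial i ∧ β = T i
  · obtain ⟨i₀, hp1, hp2⟩ := hex
    have hxne : x ≠ s i₀ := fun h => hx ⟨i₀, h.symm⟩
    obtain ⟨H, hG, hF, ψ, hψ⟩ := sep x (s i₀) hxne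
    letI := hG
    letI := hF
    apply finish ((abM M).prod ψ) x
    intro i h
    rw [MonoidHom.prod_apply, MonoidHom.prod_apply, Prod.mk.injEq] at h
    by_cases hii : i = i₀
    · exact hψ (hii ▸ h.2)
    · rcases key i with ⟨k1, k2⟩ | hk
      · have : T i = T i₀ := by
          have : (T i : ℤ) = (T i₀ : ℤ) := by omega
          exact_mod_cast this
        exact hii (T_strictMono.injective this)
      · exact hk (habs i h.1)
  · apply finish (abM M) x
    intro i h
    rcases key i with ⟨k1, k2⟩ | hk
    · exact hex ⟨i, k1, k2⟩
    · exact hk (habs i h)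

theorem not_closed : ¬ IsPTClosed (S * (Subgroup.zpowers bg : Set F)) := by
  intro h
  have h1 : (1 : F) ∉ S * (Subgroup.zpowers bg : Set F) := by
    rintro ⟨u, hu, v, hv, huv⟩
    obtain ⟨i, rfl⟩ := hu
    rw [SetLike.mem_coe, Subgroup.mem_zpowers_iff] at hv
    obtain ⟨j, rfl⟩ := hv
    have h2 := congrArg ab huv
    rw [map_mul, ab_s, ab_bz, ← ofAdd_add, map_one] at h2
    have h3 := congrArg Multiplicative.toAdd h2
    rw [toAdd_ofAdd, toAdd_one, Prod.ext_iff] at h3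
    have h4 : (Nat.factorial i : ℤ) + 0 = 0 := h3.1
    have := Nat.factorial_pos i
    omega
  obtain ⟨N, hNorm, hFin, hdisj⟩ := h 1 h1
  haveI := hNorm
  haveI := hFin
  have hEpos : 0 < N.index := Nat.pos_of_ne_zero hFin.index_ne_zero
  obtain ⟨k, hk⟩ := Nat.dvd_factorial hEpos le_rfl
  have hmem : ag ^ (Nat.factorial N.index) ∈ N := by
    rw [hk, pow_mul]
    exact Subgroup.pow_mem N (Subgroup.pow_index_mem N ag) k
  have hy : ag ^ (Nat.factorial N.index) ∈
      ((1 : F) • (N : Set F)) ∩ (S * (Subgroup.zpowers bg : Set F)) := by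
    constructor
    · rw [one_smul]
      exact hmem
    · refine ⟨s N.index, ⟨N.index, rfl⟩, bg ^ (-(T N.index : ℤ)), ?_, ?_⟩
      · rw [SetLike.mem_coe, Subgroup.mem_zpowers_iff]
        exact ⟨-(T N.index : ℤ), rfl⟩
      · show s N.index * bg ^ (-(T N.index : ℤ)) = ag ^ (Nat.factorial N.index)
        rw [s, mul_assoc, ← zpow_natCast bg (T N.index), ← zpow_add]
        simp
  rw [hdisj] at hy
  exact hy

end PTWork

/-- Let `F = ⟨a,b⟩` be the free group of rank 2.  There is a subset `S` of `F`
closed in the profinite topology of `F` such that the product `S⟨b⟩` of `S` with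
the cyclic subgroup generated by `b` is not closed in the profinite topology. -/
theorem exists_closed_set_with_product_with_cyclic_subgroup_not_closed :
    ∃ S : Set (FreeGroup (Fin 2)),
      IsPTClosed S ∧
      ¬ IsPTClosed
          (S * (Subgroup.zpowers (FreeGroup.of (1 : Fin 2)) : Set (FreeGroup (Fin 2)))) := by
  exact ⟨PTWork.S, PTWork.S_closed, PTWork.not_closed⟩
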